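/- Let B be a symmetric bilinear form on V and let α, β be unit vectors with B(α,β) = 1. Set t = r_α ∘ r_β (composition of the two reflections). Then for every integer n, B(α, tⁿ(β)) = 1. -/

import Mathlib

theorem pairing_one_invariant_under_translation
    (V : Type*) [AddCommGroup V] [Module ℝ V]
    (B : V →ₗ[ℝ] V →ₗ[ℝ] ℝ) (hsymm : ∀ x y, B x y = B y x)
    (α β : V) (hα : B α α = 1) (hβ : B β β = 1) (hab : B α β = 1)
    (t : V ≃ₗ[ℝ] V)
    (ht : ∀ x, t x = (x - (2 * B x β) • β) - (2 * B (x - (2 * B x β) • β) α) • α) :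
    ∀ n : ℤ, B α ((t ^ n) β) = 1 := by
  have hba : B β α = 1 := (hsymm β α).trans hab
  have step : ∀ x, B α (t x) = 2 * B β x - B α x ∧ B β (t x) = 3 * B β x - 2 * B α x := by
    intro x
    rw [ht x]
    simp only [map_sub, map_smul, LinearMap.sub_apply, LinearMap.smul_apply,
      smul_eq_mul, hα, hβ, hab, hba, hsymm x α, hsymm x β]
    constructor <;> ring
  have main : ∀ n : ℤ, B α ((t ^ n) β) = 1 ∧ B β ((t ^ n) β) = 1 := by
    intro n
    induction n using Int.induction_on with
    | zero => simp [hab, hβ]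
    | succ n ih =>
      have hpow : (t ^ ((n : ℤ) + 1)) β = t ((t ^ (n : ℤ)) β) := by
        rw [add_comm, zpow_add, zpow_one]
        rfl
      rw [hpow]
      obtain ⟨h1, h2⟩ := step ((t ^ (n : ℤ)) β)
      constructor <;> [rw [h1]; rw [h2]] <;> rw [ih.1, ih.2] <;> ring
    | pred n ih =>
      have hpow : t ((t ^ (-(n : ℤ) - 1)) β) = (t ^ (-(n : ℤ))) β := by
        have : t * t ^ (-(n : ℤ) - 1) = t ^ (-(n : ℤ)) := by
          rw [← zpow_one_add]
          norm_num
        calc t ((t ^ (-(n : ℤ) - 1)) β) = (t * t ^ (-(n : ℤ) - 1)) β := rfl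
          _ = (t ^ (-(n : ℤ))) β := by rw [this]
      obtain ⟨h1, h2⟩ := step ((t ^ (-(n : ℤ) - 1)) β)
      rw [hpow] at h1 h2
      rw [ih.1] at h1
      rw [ih.2] at h2
      constructor <;> linarith
  exact fun n => (main n).1
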